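/- Let n be an even positive integer. Every permutation in S_n whose cycle decomposition either consists entirely of cycles of even length, or consists of exactly two cycles of equal length n/2 (including fixed points counted appropriately), lies in the stabilizer of some partition of {1,...,n} into two blocks of size n/2. -/

import Mathlib

open Finset Equiv Equiv.Perm

set_option maxHeartbeats 1000000 in
private lemma half_support {n : ℕ} (g : Equiv.Perm (Fin n))
    (hg : ∀ c ∈ g.cycleType, Even c) :
    ∃ Δ : Finset (Fin n), Δ ⊆ g.support ∧ Δ.card * 2 = g.support.card ∧
      Δ.image g = g.support \ Δ := by
  revert hg
  induction g using Equiv.Perm.cycle_induction_on with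
  | base_one => exact fun _ => ⟨∅, by simp⟩
  | base_cycles σ hσ =>
    intro hg
    have hcOn : σ.IsCycleOn (σ.support : Set (Fin n)) := by
      rw [coe_support_eq_set_support]; exact hσ.isCycleOn
    obtain ⟨a, ha⟩ := hσ.nonempty_support
    have heven : Even σ.support.card := hg _ (by rw [hσ.cycleType]; simp)
    obtain ⟨k, hk⟩ := heven
    have hmem : ∀ j : ℕ, (σ ^ j) a ∈ σ.support := fun j => pow_apply_mem_support.2 ha
    have hps : ∀ j : ℕ, σ ((σ ^ j) a) = (σ ^ (j + 1)) a := fun j => by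
      rw [pow_succ', Equiv.Perm.mul_apply]
    have hinj : ∀ i < σ.support.card, ∀ j < σ.support.card,
        (σ ^ i) a = (σ ^ j) a → i = j := by
      intro i hi j hj hij
      exact Nat.ModEq.eq_of_lt_of_lt ((hcOn.pow_apply_eq_pow_apply ha).1 hij) hi hj
    refine ⟨(range k).image fun i => (σ ^ (2 * i)) a, ?_, ?_, ?_⟩
    · intro x hx
      simp only [mem_image, mem_range] at hx
      obtain ⟨i, _, rfl⟩ := hx
      exact hmem _
    · rw [card_image_of_injOn, card_range]; · omega
      intro i hi j hj hij
      simp only [coe_range, Set.mem_Iio] at hi hj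
      have := hinj (2 * i) (by omega) (2 * j) (by omega) hij
      omega
    · ext x
      simp only [mem_image, mem_sdiff, mem_range]
      constructor
      · rintro ⟨y, ⟨i, hi, rfl⟩, rfl⟩
        refine ⟨by rw [hps]; exact hmem _, ?_⟩
        rintro ⟨j, hj, hje⟩
        rw [hps] at hje
        have := hinj (2 * j) (by omega) (2 * i + 1) (by omega) hje
        omega
      · rintro ⟨hx, hnx⟩
        obtain ⟨j, hj, rfl⟩ := hcOn.exists_pow_eq ha hx
        rcases Nat.even_or_odd j with he | ho
        · obtain ⟨i, rfl⟩ := he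
          exact absurd ⟨i, by omega, by ring_nf⟩ hnx
        · obtain ⟨i, rfl⟩ := ho
          exact ⟨(σ ^ (2 * i)) a, ⟨i, by omega, rfl⟩, by rw [hps]⟩
  | induction_disjoint σ τ hd hσ ihσ ihτ =>
    intro hg
    rw [Equiv.Perm.Disjoint.cycleType_mul hd] at hg
    obtain ⟨Δσ, hsσ, hcσ, hiσ⟩ := ihσ fun c hc => hg c (Multiset.mem_add.2 (Or.inl hc))
    obtain ⟨Δτ, hsτ, hcτ, hiτ⟩ := ihτ fun c hc => hg c (Multiset.mem_add.2 (Or.inr hc))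
    have hds := disjoint_iff_disjoint_support.1 hd
    refine ⟨Δσ ∪ Δτ, ?_, ?_, ?_⟩
    · rw [Equiv.Perm.Disjoint.support_mul hd]; exact union_subset_union hsσ hsτ
    · rw [Equiv.Perm.Disjoint.support_mul hd, card_union_of_disjoint (hds.mono hsσ hsτ),
        card_union_of_disjoint hds]
      omega
    · have h1 : ∀ x ∈ Δσ, (σ * τ) x = σ x := by
        intro x hx
        have : x ∉ τ.support := Finset.disjoint_left.1 hds (hsσ hx)
        simp only [Equiv.Perm.mul_apply, notMem_support.1 this]
      have h2 : ∀ x ∈ Δτ, (σ * τ) x = τ x := by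
        intro x hx
        have : τ x ∉ σ.support := Finset.disjoint_left.1 hds.symm
          (apply_mem_support.2 (hsτ hx))
        simp only [Equiv.Perm.mul_apply, notMem_support.1 this]
      have e1 : Δσ.image (σ * τ) = Δσ.image σ := Finset.image_congr h1
      have e2 : Δτ.image (σ * τ) = Δτ.image τ := Finset.image_congr h2
      rw [image_union, e1, e2, hiσ, hiτ, Equiv.Perm.Disjoint.support_mul hd]
      ext x
      have h3 := Finset.disjoint_left.1 hds
      have h4 : x ∈ Δσ → x ∈ σ.support := fun h => hsσ h
      have h5 : x ∈ Δτ → x ∈ τ.support := fun h => hsτ h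
      simp only [mem_union, mem_sdiff]
      by_cases xσ : x ∈ σ.support <;> by_cases xτ : x ∈ τ.support <;> tauto

theorem even_cycles_in_two_block_stabilizer (n : ℕ) (hn : Even n) (h0 : 0 < n)
    (g : Equiv.Perm (Fin n))
    (hg : (g.support = Finset.univ ∧ ∀ c ∈ g.cycleType, Even c) ∨
      g.cycleType = {n / 2, n / 2}) :
    ∃ Δ : Finset (Fin n), Δ.card = n / 2 ∧ (Δ.image g = Δ ∨ Δ.image g = Δᶜ) := by
  obtain ⟨k, hk⟩ := hn
  rcases hg with ⟨hsupp, hev⟩ | hct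
  · obtain ⟨Δ, hsub, hcard, himg⟩ := half_support g hev
    rw [hsupp, Finset.card_univ, Fintype.card_fin] at hcard
    refine ⟨Δ, by omega, Or.inr ?_⟩
    rw [himg, hsupp, ← Finset.compl_eq_univ_sdiff]
  · have hne : g.cycleFactorsFinset.Nonempty := by
      rw [← Finset.card_pos]
      have : g.cycleType.card = 2 := by rw [hct]; rfl
      rw [cycleType_def, Multiset.card_map] at this
      have : g.cycleFactorsFinset.card = 2 := this
      omega
    obtain ⟨c, hc⟩ := hne
    have hcmem : c.support.card ∈ g.cycleType := by
      rw [cycleType_def]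
      exact Multiset.mem_map_of_mem _ hc
    rw [hct] at hcmem
    have hcard : c.support.card = n / 2 := by
      simpa using hcmem
    have hcfac := (mem_cycleFactorsFinset_iff.1 hc).2
    refine ⟨c.support, hcard, Or.inl ?_⟩
    apply Finset.eq_of_subset_of_card_le
    · intro x hx
      simp only [mem_image] at hx
      obtain ⟨y, hy, rfl⟩ := hx
      rw [← hcfac y hy]
      exact apply_mem_support.2 hy
    · rw [Finset.card_image_of_injective _ g.injective]
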